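/- Random-turn upper value: for every finite game tree G, there exists a pure strategy τ for Bob such that for every pure strategy σ for Alice, the probability that Alice wins the random-turn game satisfies Pr(G, σ, τ) ≤ P(G). -/

import Mathlib

/-- The two players. -/
inductive Player : Type
  | alice
  | bob

/-- A finite game tree: either a leaf labeled with the player who wins there,
or an internal node with a nonempty finite list of children (the positions
either player may move to), encoded as a head child `first` plus the
remaining children `rest`. -/
inductive GameTree : Type
  | leaf (winner : Player)
  | node (first : GameTree) (rest : List GameTree)

namespace GameTree

/-- The random-turn value (probability that Alice wins under optimal play when
a fair coin decides who moves): `P (leaf alice) = 1`, `P (leaf bob) = 0`, and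
at an internal node it is the average of the maximum and minimum of the values
of the children. -/
noncomputable def P : GameTree → ℝ
  | leaf .alice => 1
  | leaf .bob => 0
  | node c cs =>
      ((cs.attach.map fun w => P w.1).foldr max (P c) +
       (cs.attach.map fun w => P w.1).foldr min (P c)) / 2
decreasing_by
  all_goals simp only [GameTree.node.sizeOf_spec]
  all_goals try omega
  all_goals (have h := List.sizeOf_lt_of_mem w.2; omega)

/-- A pure strategy: a function assigning to each internal node one of its
children. -/
structure Strategy where
  move : GameTree → GameTree
  move_mem : ∀ (c : GameTree) (cs : List GameTree), move (node c cs) ∈ c :: cs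

theorem sizeOf_lt_of_mem_children {w c : GameTree} {cs : List GameTree}
    (h : w ∈ c :: cs) : sizeOf w < sizeOf (node c cs) := by
  rcases List.mem_cons.mp h with rfl | h
  · simp only [node.sizeOf_spec]; omega
  · have := List.sizeOf_lt_of_mem h
    simp only [node.sizeOf_spec]; omega

/-- The probability that Alice wins the random-turn game when Alice plays the
pure strategy `σ` and Bob plays the pure strategy `τ`: at each internal node a
fair coin flip decides which player's strategy makes the move. -/
noncomputable def Pr (σ τ : Strategy) : GameTree → ℝ
  | leaf .alice => 1
  | leaf .bob => 0
  | node c cs =>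
      (Pr σ τ (σ.move (node c cs)) + Pr σ τ (τ.move (node c cs))) / 2
termination_by g => sizeOf g
decreasing_by
  · exact sizeOf_lt_of_mem_children (σ.move_mem c cs)
  · exact sizeOf_lt_of_mem_children (τ.move_mem c cs)


theorem foldr_min_eq_or_mem (l : List ℝ) (a : ℝ) : l.foldr min a = a ∨ l.foldr min a ∈ l := by
  induction l with
  | nil => left; rfl
  | cons x xs ih =>
    rcases min_choice x (xs.foldr min a) with h | h
    · right; simp [List.foldr, h]
    · rcases ih with h2 | h2
      · left; rw [List.foldr_cons, h, h2]
      · right; simp [List.foldr, h]; right; exact h2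

theorem le_foldr_max_base (l : List ℝ) (a : ℝ) : a ≤ l.foldr max a := by
  induction l with
  | nil => exact le_refl a
  | cons x xs ih => exact le_trans ih (le_max_right _ _)

theorem le_foldr_max_of_mem {x : ℝ} {l : List ℝ} (a : ℝ) (h : x ∈ l) : x ≤ l.foldr max a := by
  induction l with
  | nil => cases h
  | cons y ys ih =>
    rcases List.mem_cons.mp h with rfl | h
    · exact le_max_left _ _
    · exact le_trans (ih h) (le_max_right _ _)

theorem exists_min_child (c : GameTree) (cs : List GameTree) :
    ∃ w, w ∈ c :: cs ∧ P w = (cs.attach.map fun w => P w.1).foldr min (P c) := by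
  rcases foldr_min_eq_or_mem (cs.attach.map fun w => P w.1) (P c) with h | h
  · exact ⟨c, List.mem_cons_self, h.symm⟩
  · rcases List.mem_map.mp h with ⟨w, _, hw2⟩
    exact ⟨w.1, List.mem_cons_of_mem _ w.2, hw2⟩

/-- Bob's optimal strategy: always move to a child of minimal value. -/
noncomputable def bob : Strategy where
  move g := match g with
    | leaf p => leaf p
    | node c cs => (exists_min_child c cs).choose
  move_mem c cs := (exists_min_child c cs).choose_spec.1

theorem P_le_foldr_max {w c : GameTree} {cs : List GameTree} (h : w ∈ c :: cs) :
    P w ≤ (cs.attach.map fun w => P w.1).foldr max (P c) := by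
  rcases List.mem_cons.mp h with rfl | h
  · exact le_foldr_max_base _ _
  · exact le_foldr_max_of_mem _ (List.mem_map.mpr ⟨⟨w, h⟩, List.mem_attach _ _, rfl⟩)

theorem key : ∀ n g, sizeOf g ≤ n → ∀ σ : Strategy, Pr σ bob g ≤ P g := by
  intro n
  induction n with
  | zero => intro g hg; cases g <;> simp [node.sizeOf_spec] at hg
  | succ n ih =>
    intro g hg σ
    match g with
    | leaf .alice => simp [Pr, P]
    | leaf .bob => simp [Pr, P]
    | node c cs =>
      have h1 : sizeOf (σ.move (node c cs)) ≤ n := by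
        have := sizeOf_lt_of_mem_children (σ.move_mem c cs); omega
      have h2 : sizeOf (bob.move (node c cs)) ≤ n := by
        have := sizeOf_lt_of_mem_children (bob.move_mem c cs); omega
      have e1 : Pr σ bob (σ.move (node c cs)) ≤ P (σ.move (node c cs)) := ih _ h1 σ
      have e2 : Pr σ bob (bob.move (node c cs)) ≤ P (bob.move (node c cs)) := ih _ h2 σ
      have m1 : P (σ.move (node c cs)) ≤ (cs.attach.map fun w => P w.1).foldr max (P c) :=
        P_le_foldr_max (σ.move_mem c cs)
      have m2 : P (bob.move (node c cs)) = (cs.attach.map fun w => P w.1).foldr min (P c) :=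
        (exists_min_child c cs).choose_spec.2
      rw [Pr, P]
      have := e1.trans m1
      have := e2.trans_eq m2
      linarith

/-- **Random-turn upper value.** For every finite game tree `G`, Bob has a
pure strategy `τ` limiting Alice's winning probability to at most `P(G)`
against every pure strategy `σ` of Alice. -/
theorem randomTurn_upper_value (G : GameTree) :
    ∃ τ : Strategy, ∀ σ : Strategy, Pr σ τ G ≤ P G :=
  ⟨bob, fun σ => key (sizeOf G) G le_rfl σ⟩

end GameTree
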